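/- If b is slowly varying on (0,∞) and ∫₁^∞ u^{-1} b(u) du < ∞, then the function b̃(t) := ∫_t^∞ u^{-1} b(u) du is slowly varying on (0,∞), and b(t) ≲ b̃(t) for all t > 0. -/

import Mathlib

/-- A measurable function `b : (0,∞) → (0,∞)` is slowly varying if for every `ε > 0`,
`t^ε b(t)` is equivalent (up to positive multiplicative constants) to a positive
non-decreasing function and `t^{-ε} b(t)` is equivalent to a positive non-increasing
function on `(0,∞)`. -/
def SlowlyVarying (b : ℝ → ℝ) : Prop :=
  Measurable b ∧ (∀ t : ℝ, 0 < t → 0 < b t) ∧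
  ∀ ε : ℝ, 0 < ε →
    (∃ g : ℝ → ℝ, (∀ t : ℝ, 0 < t → 0 < g t) ∧ MonotoneOn g (Set.Ioi 0) ∧
      ∃ c C : ℝ, 0 < c ∧ 0 < C ∧ ∀ t : ℝ, 0 < t →
        c * g t ≤ t ^ ε * b t ∧ t ^ ε * b t ≤ C * g t) ∧
    (∃ g : ℝ → ℝ, (∀ t : ℝ, 0 < t → 0 < g t) ∧ AntitoneOn g (Set.Ioi 0) ∧
      ∃ c C : ℝ, 0 < c ∧ 0 < C ∧ ∀ t : ℝ, 0 < t →
        c * g t ≤ t ^ (-ε) * b t ∧ t ^ (-ε) * b t ≤ C * g t)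

open MeasureTheory

open Set

/-- If `b` is slowly varying on `(0,∞)` and `∫₁^∞ u⁻¹ b(u) du < ∞`, then
`b̃(t) := ∫_t^∞ u⁻¹ b(u) du` is slowly varying on `(0,∞)` and `b(t) ≲ b̃(t)` for `t > 0`. -/
theorem slowlyVarying_tilde (b : ℝ → ℝ) (hb : SlowlyVarying b)
    (hint : IntegrableOn (fun u => u⁻¹ * b u) (Set.Ioi (1:ℝ))) :
    SlowlyVarying (fun t => ∫ u in Set.Ioi t, u⁻¹ * b u) ∧
    ∃ C : ℝ, 0 < C ∧ ∀ t : ℝ, 0 < t → b t ≤ C * ∫ u in Set.Ioi t, u⁻¹ * b u := by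
  obtain ⟨hbm, hbpos, hsv⟩ := hb
  set f : ℝ → ℝ := fun u => u⁻¹ * b u with hfdef
  set B : ℝ → ℝ := fun t => ∫ u in Ioi t, f u with hBdef
  have hfmeas : Measurable f := measurable_inv.mul hbm
  -- slow variation with ε = 1
  obtain ⟨g1, hg1pos, hg1mono, c1, C1, hc1, hC1, hg1⟩ := (hsv 1 one_pos).1
  have hg1' : ∀ t : ℝ, 0 < t → c1 * g1 t ≤ t * b t ∧ t * b t ≤ C1 * g1 t := by
    intro t ht
    have := hg1 t ht
    rwa [Real.rpow_one] at this
  -- integrability on Ioi t for every t > 0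
  have hfint : ∀ t : ℝ, 0 < t → IntegrableOn f (Ioi t) := by
    intro t ht
    rcases le_or_gt 1 t with h1 | h1
    · exact hint.mono_set (Ioi_subset_Ioi h1)
    · rw [← Ioc_union_Ioi_eq_Ioi h1.le]
      refine IntegrableOn.union ?_ hint
      refine Measure.integrableOn_of_bounded (M := t⁻¹ * (t⁻¹ * (C1 * g1 1)))
        (by simp [Real.volume_Ioc]) hfmeas.aestronglyMeasurable ?_
      rw [ae_restrict_iff' measurableSet_Ioc]
      refine Filter.Eventually.of_forall fun u hu => ?_
      have hu0 : 0 < u := ht.trans hu.1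
      have hbu : 0 < b u := hbpos u hu0
      have hub : u * b u ≤ C1 * g1 1 :=
        (hg1' u hu0).2.trans (mul_le_mul_of_nonneg_left
          (hg1mono (mem_Ioi.2 hu0) (mem_Ioi.2 one_pos) hu.2) hC1.le)
      have hfu : f u = u⁻¹ * b u := rfl
      rw [Real.norm_eq_abs, abs_of_pos (by positivity : (0:ℝ) < f u), hfu]
      have h2 : b u ≤ t⁻¹ * (C1 * g1 1) := by
        rw [le_inv_mul_iff₀ ht]
        nlinarith [hu.1.le]
      have h3 : u⁻¹ ≤ t⁻¹ := by
        apply inv_anti₀ ht hu.1.le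
      have hg1onepos : 0 < g1 1 := hg1pos 1 one_pos
      exact mul_le_mul h3 h2 hbu.le (by positivity)
  -- nonnegativity a.e.
  have hfnn : ∀ t : ℝ, 0 < t → 0 ≤ᶠ[ae (volume.restrict (Ioi t))] f := by
    intro t ht
    rw [Filter.EventuallyLE, ae_restrict_iff' measurableSet_Ioi]
    refine Filter.Eventually.of_forall fun u hu => ?_
    have hu0 : 0 < u := ht.trans hu
    exact mul_nonneg (inv_nonneg.2 hu0.le) (hbpos u hu0).le
  -- antitone
  have hBanti : ∀ s t : ℝ, 0 < s → s ≤ t → B t ≤ B s := fun s t hs hst =>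
    setIntegral_mono_set (hfint s hs) (hfnn s hs) ((Ioi_subset_Ioi hst).eventuallyLE)
  -- splitting
  have hBsplit : ∀ s t : ℝ, 0 < s → s ≤ t → B s = (∫ u in Ioc s t, f u) + B t := by
    intro s t hs hst
    rw [hBdef]
    simp only
    rw [← Ioc_union_Ioi_eq_Ioi hst,
      setIntegral_union (Ioc_disjoint_Ioi le_rfl) measurableSet_Ioi
        ((hfint s hs).mono_set Ioc_subset_Ioi_self) (hfint t (hs.trans_le hst))]
  -- rpow integral over Ioc
  have hIoc : ∀ s t r : ℝ, 0 < s → s ≤ t → r ≠ -1 →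
      ∫ u in Ioc s t, u ^ r = (t ^ (r+1) - s ^ (r+1)) / (r+1) := by
    intro s t r hs hst hr
    rw [← intervalIntegral.integral_of_le hst]
    exact integral_rpow (Or.inr ⟨hr, notMem_uIcc_of_lt hs (hs.trans_le hst)⟩)
  have hIocInt : ∀ s t r : ℝ, 0 < s → s ≤ t →
      IntegrableOn (fun u : ℝ => u ^ r) (Ioc s t) := by
    intro s t r hs hst
    exact (intervalIntegral.intervalIntegrable_rpow
      (Or.inr (notMem_uIcc_of_lt hs (hs.trans_le hst)))).1
  -- the key lower bound : κ * b t ≤ B t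
  set κ : ℝ := c1 / (2 * C1) with hκdef
  have hκ : 0 < κ := by positivity
  have hkey : ∀ t : ℝ, 0 < t → κ * b t ≤ B t := by
    intro t ht
    have h2t : t ≤ 2 * t := by linarith
    set K : ℝ := c1 / C1 * (t * b t) with hKdef
    have hbt : 0 < b t := hbpos t ht
    have hKpos : 0 < K := by positivity
    have hpt : ∀ u ∈ Ioc t (2*t), K * u ^ (-2:ℝ) ≤ f u := by
      intro u hu
      have hu0 : 0 < u := ht.trans hu.1
      have h1 : K ≤ u * b u := by
        have ha : t * b t ≤ C1 * g1 t := (hg1' t ht).2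
        have hb' : g1 t ≤ g1 u := hg1mono (mem_Ioi.2 ht) (mem_Ioi.2 hu0) hu.1.le
        have hc : c1 * g1 u ≤ u * b u := (hg1' u hu0).1
        rw [hKdef, div_mul_eq_mul_div, div_le_iff₀ hC1]
        calc c1 * (t * b t) ≤ c1 * (C1 * g1 t) := mul_le_mul_of_nonneg_left ha hc1.le
          _ ≤ c1 * (C1 * g1 u) :=
            mul_le_mul_of_nonneg_left (mul_le_mul_of_nonneg_left hb' hC1.le) hc1.le
          _ = C1 * (c1 * g1 u) := by ring
          _ ≤ C1 * (u * b u) := mul_le_mul_of_nonneg_left hc hC1.le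
          _ = u * b u * C1 := by ring
      have h2 : u ^ (-2:ℝ) = (u * u)⁻¹ := by
        rw [show (-2:ℝ) = -(1+1) by norm_num, Real.rpow_neg hu0.le, Real.rpow_add hu0,
          Real.rpow_one]
      have h3 : (u * b u) * (u * u)⁻¹ = u⁻¹ * b u := by
        field_simp
      calc K * u ^ (-2:ℝ) = K * (u*u)⁻¹ := by rw [h2]
        _ ≤ (u * b u) * (u*u)⁻¹ := mul_le_mul_of_nonneg_right h1 (by positivity)
        _ = u⁻¹ * b u := h3
        _ = f u := rfl
    have hInt2 : ∫ u in Ioc t (2*t), u ^ (-2:ℝ) = 1/(2*t) := by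
      rw [hIoc t (2*t) (-2) ht h2t (by norm_num)]
      norm_num
      rw [Real.rpow_neg_one, Real.rpow_neg_one]
      field_simp
      ring
    have step1 : K * (1/(2*t)) ≤ ∫ u in Ioc t (2*t), f u := by
      calc K * (1/(2*t)) = ∫ u in Ioc t (2*t), K * u ^ (-2:ℝ) := by
            rw [MeasureTheory.integral_const_mul, hInt2]
        _ ≤ ∫ u in Ioc t (2*t), f u :=
            setIntegral_mono_on ((hIocInt t (2*t) (-2) ht h2t).const_mul K)
              ((hfint t ht).mono_set Ioc_subset_Ioi_self) measurableSet_Ioc hpt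
    have step2 : (∫ u in Ioc t (2*t), f u) ≤ B t :=
      setIntegral_mono_set (hfint t ht) (hfnn t ht)
        (Ioc_subset_Ioi_self.eventuallyLE)
    have harith : κ * b t = K * (1/(2*t)) := by
      rw [hκdef, hKdef]
      field_simp
    rw [harith]
    exact step1.trans step2
  have hBpos : ∀ t : ℝ, 0 < t → 0 < B t := fun t ht =>
    lt_of_lt_of_le (mul_pos hκ (hbpos t ht)) (hkey t ht)
  have hbB : ∀ t : ℝ, 0 < t → b t ≤ κ⁻¹ * B t := by
    intro t ht
    calc b t = κ⁻¹ * (κ * b t) := by field_simp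
      _ ≤ κ⁻¹ * B t := mul_le_mul_of_nonneg_left (hkey t ht) (inv_nonneg.2 hκ.le)
  -- measurability of B
  have hBmeas : Measurable B := by
    have h1 : B = fun t => ∫ u, (Ioi t).indicator f u := by
      funext t; rw [integral_indicator measurableSet_Ioi]
    rw [h1]
    have hF : StronglyMeasurable (fun p : ℝ × ℝ => (Ioi p.1).indicator f p.2) := by
      have h2 : (fun p : ℝ × ℝ => (Ioi p.1).indicator f p.2)
          = fun p : ℝ × ℝ => if p.1 < p.2 then f p.2 else 0 := by
        funext p; simp [indicator, mem_Ioi]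
      rw [h2]
      exact (Measurable.ite (measurableSet_lt measurable_fst measurable_snd)
        (hfmeas.comp measurable_snd) measurable_const).stronglyMeasurable
    exact hF.integral_prod_right'.measurable
  refine ⟨⟨hBmeas, hBpos, ?_⟩, ⟨κ⁻¹, inv_pos.2 hκ, hbB⟩⟩
  intro ε hε
  constructor
  · -- nondecreasing part : quasi-monotonicity + sSup construction
    obtain ⟨ge, hgepos, hgemono, ce, Ce, hce, hCe, hge⟩ := (hsv ε hε).1
    set M : ℝ := 1 + Ce / (ce * ε * κ) with hMdef
    have hM : 0 < M := by
      have h0 : 0 < Ce / (ce * ε * κ) := div_pos hCe (by positivity)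
      rw [hMdef]
      linarith
    have hqm : ∀ s t : ℝ, 0 < s → s ≤ t → s ^ ε * B s ≤ M * (t ^ ε * B t) := by
      intro s t hs hst
      have ht : 0 < t := hs.trans_le hst
      have hbt : 0 < b t := hbpos t ht
      -- bound on the integrand over Ioc s t
      have hpt : ∀ u ∈ Ioc s t, f u ≤ (Ce/ce * (t ^ ε * b t)) * u ^ (-(1+ε)) := by
        intro u hu
        have hu0 : 0 < u := hs.trans hu.1
        have h1 : u ^ ε * b u ≤ Ce/ce * (t ^ ε * b t) := by
          have ha : u ^ ε * b u ≤ Ce * ge u := (hge u hu0).2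
          have hb' : ge u ≤ ge t := hgemono (mem_Ioi.2 hu0) (mem_Ioi.2 ht) hu.2
          have hc : ce * ge t ≤ t ^ ε * b t := (hge t ht).1
          rw [div_mul_eq_mul_div, le_div_iff₀ hce]
          calc u ^ ε * b u * ce = ce * (u ^ ε * b u) := by ring
            _ ≤ ce * (Ce * ge u) := mul_le_mul_of_nonneg_left ha hce.le
            _ ≤ ce * (Ce * ge t) :=
              mul_le_mul_of_nonneg_left (mul_le_mul_of_nonneg_left hb' hCe.le) hce.le
            _ = Ce * (ce * ge t) := by ring
            _ ≤ Ce * (t ^ ε * b t) := mul_le_mul_of_nonneg_left hc hCe.le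
        have h2 : f u = u ^ (-(1+ε)) * (u ^ ε * b u) := by
          rw [hfdef]
          simp only
          rw [← mul_assoc, ← Real.rpow_add hu0, show -(1+ε)+ε = -1 by ring,
            Real.rpow_neg_one]
        rw [h2, mul_comm ((Ce/ce * (t ^ ε * b t))) (u ^ (-(1+ε)))]
        exact mul_le_mul_of_nonneg_left h1 (by positivity)
      have hI : (∫ u in Ioc s t, f u) ≤ (Ce/ce * (t ^ ε * b t)) * (s ^ (-ε) / ε) := by
        have e1 : (∫ u in Ioc s t, f u)
            ≤ ∫ u in Ioc s t, (Ce/ce * (t ^ ε * b t)) * u ^ (-(1+ε)) :=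
          setIntegral_mono_on ((hfint s hs).mono_set Ioc_subset_Ioi_self)
            ((hIocInt s t (-(1+ε)) hs hst).const_mul _) measurableSet_Ioc hpt
        have e2 : ∫ u in Ioc s t, (Ce/ce * (t ^ ε * b t)) * u ^ (-(1+ε))
            = (Ce/ce * (t ^ ε * b t)) * ((t ^ (-ε) - s ^ (-ε)) / (-ε)) := by
          rw [MeasureTheory.integral_const_mul, hIoc s t (-(1+ε)) hs hst (by intro h; nlinarith)]
          norm_num
        have e3 : (t ^ (-ε) - s ^ (-ε)) / (-ε) ≤ s ^ (-ε) / ε := by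
          rw [div_neg, ← neg_div, neg_sub]
          have h4 : (0:ℝ) ≤ t ^ (-ε) := Real.rpow_nonneg ht.le _
          gcongr
          linarith
        refine e1.trans (e2 ▸ mul_le_mul_of_nonneg_left e3
          (mul_nonneg (div_nonneg hCe.le hce.le)
            (mul_nonneg (Real.rpow_nonneg ht.le ε) hbt.le)))
      have hsε : s ^ ε * s ^ (-ε) = 1 := by
        rw [← Real.rpow_add hs]; simp
      have hstε : s ^ ε ≤ t ^ ε := Real.rpow_le_rpow hs.le hst hε.le
      have hbtB : b t ≤ κ⁻¹ * B t := hbB t ht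
      have hBt : 0 < B t := hBpos t ht
      calc s ^ ε * B s = s ^ ε * (∫ u in Ioc s t, f u) + s ^ ε * B t := by
            rw [hBsplit s t hs hst]; ring
        _ ≤ s ^ ε * ((Ce/ce * (t ^ ε * b t)) * (s ^ (-ε) / ε)) + t ^ ε * B t :=
            add_le_add (mul_le_mul_of_nonneg_left hI (Real.rpow_nonneg hs.le ε))
              (mul_le_mul_of_nonneg_right hstε hBt.le)
        _ = Ce/(ce*ε) * (t ^ ε * b t) * (s ^ ε * s ^ (-ε)) + t ^ ε * B t := by
            field_simp
        _ = Ce/(ce*ε) * (t ^ ε * b t) + t ^ ε * B t := by rw [hsε, mul_one]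
        _ ≤ Ce/(ce*ε) * (t ^ ε * (κ⁻¹ * B t)) + t ^ ε * B t := by
            have h5 : t ^ ε * b t ≤ t ^ ε * (κ⁻¹ * B t) :=
              mul_le_mul_of_nonneg_left hbtB (Real.rpow_nonneg ht.le ε)
            have h6 : (0:ℝ) ≤ Ce/(ce*ε) := div_nonneg hCe.le (mul_nonneg hce.le hε.le)
            exact add_le_add (mul_le_mul_of_nonneg_left h5 h6) le_rfl
        _ = (Ce/(ce*ε*κ) + 1) * (t ^ ε * B t) := by
            field_simp
        _ = M * (t ^ ε * B t) := by rw [hMdef]; ring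
    set φ : ℝ → ℝ := fun r => r ^ ε * B r with hφdef
    have hbdd : ∀ t : ℝ, 0 < t → BddAbove (φ '' Ioc 0 t) := by
      intro t ht
      refine ⟨M * (t ^ ε * B t), ?_⟩
      rintro x ⟨r, hr, rfl⟩
      exact hqm r t hr.1 hr.2
    have hne : ∀ t : ℝ, 0 < t → (φ '' Ioc 0 t).Nonempty :=
      fun t ht => ⟨φ t, mem_image_of_mem φ ⟨ht, le_rfl⟩⟩
    have hup : ∀ t : ℝ, 0 < t → φ t ≤ sSup (φ '' Ioc 0 t) :=
      fun t ht => le_csSup (hbdd t ht) (mem_image_of_mem φ ⟨ht, le_rfl⟩)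
    have hdown : ∀ t : ℝ, 0 < t → sSup (φ '' Ioc 0 t) ≤ M * (t ^ ε * B t) := by
      intro t ht
      refine csSup_le (hne t ht) ?_
      rintro x ⟨r, hr, rfl⟩
      exact hqm r t hr.1 hr.2
    have hφpos : ∀ t : ℝ, 0 < t → 0 < φ t :=
      fun t ht => mul_pos (Real.rpow_pos_of_pos ht _) (hBpos t ht)
    refine ⟨fun t => sSup (φ '' Ioc 0 t),
      fun t ht => lt_of_lt_of_le (hφpos t ht) (hup t ht), ?_, M⁻¹, 1, inv_pos.2 hM,
      one_pos, ?_⟩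
    · intro s hs t ht hst
      simp only [mem_Ioi] at hs ht
      exact csSup_le_csSup (hbdd t ht) (hne s hs) (image_subset_iff.2 fun x hx => mem_image_of_mem φ (Ioc_subset_Ioc_right hst hx))
    · intro t ht
      refine ⟨?_, ?_⟩
      · calc M⁻¹ * sSup (φ '' Ioc 0 t) ≤ M⁻¹ * (M * (t ^ ε * B t)) :=
              mul_le_mul_of_nonneg_left (hdown t ht) (inv_nonneg.2 hM.le)
          _ = t ^ ε * B t := by field_simp
      · rw [one_mul]
        exact hup t ht
  · -- nonincreasing part : t ^ (-ε) * B t is itself antitone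
    refine ⟨fun t => t ^ (-ε) * B t,
      fun t ht => mul_pos (Real.rpow_pos_of_pos ht _) (hBpos t ht), ?_, 1, 1, one_pos, one_pos,
      fun t ht => by simp⟩
    intro s hs t ht hst
    simp only [mem_Ioi] at hs ht
    have h1 : t ^ (-ε) ≤ s ^ (-ε) := Real.rpow_le_rpow_of_nonpos hs hst (by linarith)
    exact mul_le_mul h1 (hBanti s t hs hst) (hBpos t ht).le (Real.rpow_nonneg hs.le _)
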